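/- Let M be a k × k' matrix over ZMod 2 of rank χ, and define p : (ZMod 2)^(k+k') → ZMod 2 by p(x,y) = ∑_{i,j} M_{ij} x_i y_j. Then the maximum over w ∈ (ZMod 2)^(k+k') of |∑_{(x,y)} (−1)^(p(x,y) + ⟨(x,y),w⟩)|^2 divided by 2^(k+k') equals 2^(k+k'−2χ). Equivalently, the PAR under the Walsh–Hadamard transform of the normalized state 2^(−(k+k')/2)(−1)^(p(x,y)) is 2^(k+k'−2χ). -/

import Mathlib

open Finset

private noncomputable def e2 (a : ZMod 2) : ℝ := (-1) ^ a.val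

private lemma zmod2_cases (a : ZMod 2) : a = 0 ∨ a = 1 := by revert a; decide

private lemma e2_zero : e2 0 = 1 := by norm_num [e2]

private lemma e2_one : e2 1 = -1 := by
  norm_num [e2, ZMod.val_one]

private lemma e2_add (a b : ZMod 2) : e2 (a + b) = e2 a * e2 b := by
  rcases zmod2_cases a with ha | ha <;> rcases zmod2_cases b with hb | hb <;>
    subst ha <;> subst hb <;>
    simp [e2_zero, e2_one, show (1 + 1 : ZMod 2) = 0 by decide]

private lemma e2_abs (a : ZMod 2) : |e2 a| ≤ 1 := by
  rcases zmod2_cases a with ha | ha <;> subst ha <;> simp [e2_zero, e2_one]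

private lemma e2_sum {ι : Type*} (s : Finset ι) (f : ι → ZMod 2) :
    e2 (∑ i ∈ s, f i) = ∏ i ∈ s, e2 (f i) := by
  induction s using Finset.cons_induction with
  | empty => simp [e2_zero]
  | cons i s hi ih => rw [Finset.sum_cons, Finset.prod_cons, e2_add, ih]

private lemma sum_e2 {m : ℕ} (v : Fin m → ZMod 2) :
    ∑ x : Fin m → ZMod 2, e2 (∑ i, x i * v i) =
      if v = 0 then (2 : ℝ) ^ m else 0 := by
  have h : ∀ x : Fin m → ZMod 2, e2 (∑ i, x i * v i) = ∏ i, e2 (x i * v i) :=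
    fun x => e2_sum _ _
  simp_rw [h]
  rw [← Fintype.prod_sum (fun i (a : ZMod 2) => e2 (a * v i))]
  have huniv : (Finset.univ : Finset (ZMod 2)) = {0, 1} := by decide
  have hsum : ∀ i, ∑ a : ZMod 2, e2 (a * v i) = if v i = 0 then (2 : ℝ) else 0 := by
    intro i
    rw [huniv, Finset.sum_insert (by decide), Finset.sum_singleton]
    rcases zmod2_cases (v i) with hv | hv <;> rw [hv] <;>
      norm_num [e2_zero, e2_one]
  simp_rw [hsum]
  by_cases hv : v = 0
  · simp [hv]
  · obtain ⟨i, hi⟩ := Function.ne_iff.mp hv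
    rw [if_neg hv]
    refine Finset.prod_eq_zero (Finset.mem_univ i) ?_
    simp only [Pi.zero_apply] at hi
    simp [hi]

private lemma S_eq (k k' : ℕ) (M : Matrix (Fin k) (Fin k') (ZMod 2))
    (w : (Fin k → ZMod 2) × (Fin k' → ZMod 2)) :
    (∑ x : (Fin k → ZMod 2) × (Fin k' → ZMod 2),
        (-1 : ℝ) ^ (((∑ i, ∑ j, M i j * x.1 i * x.2 j)
          + ((∑ i, x.1 i * w.1 i) + (∑ j, x.2 j * w.2 j))).val))
    = 2 ^ k * ∑ y ∈ Finset.univ.filter (fun y => M.mulVec y = w.1),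
        e2 (∑ j, y j * w.2 j) := by
  have key : ∀ x : Fin k → ZMod 2, ∀ y : Fin k' → ZMod 2,
      (∑ i, ∑ j, M i j * x i * y j)
          + ((∑ i, x i * w.1 i) + (∑ j, y j * w.2 j))
        = (∑ i, x i * (M.mulVec y + w.1) i) + ∑ j, y j * w.2 j := by
    intro x y
    simp only [Pi.add_apply, Matrix.mulVec, dotProduct, mul_add,
      Finset.sum_add_distrib, Finset.mul_sum]
    rw [← add_assoc]
    congr 1
    congr 1
    exact Finset.sum_congr rfl fun i _ => Finset.sum_congr rfl fun j _ => by ring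
  have hadd : ∀ a b : ZMod 2, a + b = 0 ↔ a = b := by decide
  calc (∑ x : (Fin k → ZMod 2) × (Fin k' → ZMod 2),
        (-1 : ℝ) ^ (((∑ i, ∑ j, M i j * x.1 i * x.2 j)
          + ((∑ i, x.1 i * w.1 i) + (∑ j, x.2 j * w.2 j))).val))
      = ∑ y : Fin k' → ZMod 2, ∑ x : Fin k → ZMod 2,
          e2 (∑ i, x i * (M.mulVec y + w.1) i) * e2 (∑ j, y j * w.2 j) := by
        rw [Fintype.sum_prod_type, Finset.sum_comm]
        exact Finset.sum_congr rfl fun y _ => Finset.sum_congr rfl fun x _ => by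
          show e2 _ = _
          rw [key, e2_add]
    _ = ∑ y : Fin k' → ZMod 2,
          (if M.mulVec y + w.1 = 0 then (2:ℝ) ^ k else 0) * e2 (∑ j, y j * w.2 j) := by
        refine Finset.sum_congr rfl fun y _ => ?_
        rw [← Finset.sum_mul, sum_e2]
    _ = ∑ y : Fin k' → ZMod 2,
          (if M.mulVec y = w.1 then (2:ℝ) ^ k * e2 (∑ j, y j * w.2 j) else 0) := by
        refine Finset.sum_congr rfl fun y _ => ?_
        have hc : M.mulVec y + w.1 = 0 ↔ M.mulVec y = w.1 := by
          constructor <;> intro h <;> funext i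
          · exact (hadd _ _).mp (congrFun h i)
          · exact (hadd _ _).mpr (congrFun h i)
        rw [ite_mul, zero_mul, if_congr hc rfl rfl]
    _ = 2 ^ k * ∑ y ∈ Finset.univ.filter (fun y => M.mulVec y = w.1),
          e2 (∑ j, y j * w.2 j) := by
        rw [Finset.mul_sum, Finset.sum_filter]

private lemma card_ker (k k' χ : ℕ) (M : Matrix (Fin k) (Fin k') (ZMod 2))
    (hχ : M.rank = χ) :
    (Finset.univ.filter (fun y : Fin k' → ZMod 2 => M.mulVec y = 0)).card
      = 2 ^ (k' - χ) := by
  classical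
  have h1 : (Finset.univ.filter (fun y : Fin k' → ZMod 2 => M.mulVec y = 0)).card
      = Fintype.card (LinearMap.ker M.mulVecLin) := by
    rw [Fintype.card_subtype]
    congr 1
    refine Finset.filter_congr fun y _ => ?_
    simp [LinearMap.mem_ker, Matrix.mulVecLin_apply]
  have h2 : Fintype.card (LinearMap.ker M.mulVecLin)
      = 2 ^ Module.finrank (ZMod 2) (LinearMap.ker M.mulVecLin) := by
    have := Module.card_eq_pow_finrank (K := ZMod 2) (V := LinearMap.ker M.mulVecLin)
    simpa [ZMod.card] using this
  have h3 := LinearMap.finrank_range_add_finrank_ker (M.mulVecLin)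
  rw [Module.finrank_fintype_fun_eq_card] at h3
  rw [Matrix.rank] at hχ
  rw [Fintype.card_fin, hχ] at h3
  rw [h1, h2]
  congr 1
  omega

private lemma card_sol_le (k k' : ℕ) (M : Matrix (Fin k) (Fin k') (ZMod 2))
    (w1 : Fin k → ZMod 2) :
    (Finset.univ.filter (fun y : Fin k' → ZMod 2 => M.mulVec y = w1)).card
      ≤ (Finset.univ.filter (fun y : Fin k' → ZMod 2 => M.mulVec y = 0)).card := by
  classical
  rcases (Finset.univ.filter
      (fun y : Fin k' → ZMod 2 => M.mulVec y = w1)).eq_empty_or_nonempty with h | h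
  · simp [h]
  · obtain ⟨y0, hy0⟩ := h
    rw [Finset.mem_filter] at hy0
    have hself : ∀ a : ZMod 2, a + a = 0 := by decide
    refine Finset.card_le_card_of_injOn (fun y => y + y0) ?_ ?_
    · intro y hy
      rw [Finset.mem_coe, Finset.mem_filter] at hy ⊢
      refine ⟨Finset.mem_univ _, ?_⟩
      rw [Matrix.mulVec_add, hy.2, hy0.2]
      funext i
      exact hself (w1 i)
    · intro a _ b _ hab
      exact add_right_cancel hab

theorem stmt_6 (k k' χ : ℕ) (M : Matrix (Fin k) (Fin k') (ZMod 2))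
    (hχ : M.rank = χ) :
    (⨆ w : (Fin k → ZMod 2) × (Fin k' → ZMod 2),
        |∑ x : (Fin k → ZMod 2) × (Fin k' → ZMod 2),
            (-1 : ℝ) ^ (((∑ i, ∑ j, M i j * x.1 i * x.2 j)
              + ((∑ i, x.1 i * w.1 i) + (∑ j, x.2 j * w.2 j))).val)| ^ 2)
        / 2 ^ (k + k')
      = 2 ^ (k + k' - 2 * χ) := by
  classical
  have hk : χ ≤ k := hχ ▸ (M.rank_le_card_height.trans (Fintype.card_fin k).le)
  have hk' : χ ≤ k' := hχ ▸ (M.rank_le_card_width.trans (Fintype.card_fin k').le)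
  set C : ℝ := 2 ^ k * 2 ^ (k' - χ) with hC
  have hCpos : (0:ℝ) < C := by positivity
  have hcardR : ((Finset.univ.filter
        (fun y : Fin k' → ZMod 2 => M.mulVec y = 0)).card : ℝ)
      = 2 ^ (k' - χ) := by
    rw [card_ker k k' χ M hχ]; push_cast; ring
  simp only [S_eq k k' M]
  set f : (Fin k → ZMod 2) × (Fin k' → ZMod 2) → ℝ := fun w =>
    |2 ^ k * ∑ y ∈ Finset.univ.filter (fun y => M.mulVec y = w.1),
        e2 (∑ j, y j * w.2 j)| ^ 2 with hf
  have hle : ∀ w, f w ≤ C ^ 2 := by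
    intro w
    have habs : |(∑ y ∈ Finset.univ.filter (fun y => M.mulVec y = w.1),
        e2 (∑ j, y j * w.2 j))| ≤ (2:ℝ) ^ (k' - χ) := by
      calc |(∑ y ∈ Finset.univ.filter (fun y => M.mulVec y = w.1),
            e2 (∑ j, y j * w.2 j))|
          ≤ ∑ y ∈ Finset.univ.filter (fun y => M.mulVec y = w.1),
            |e2 (∑ j, y j * w.2 j)| := Finset.abs_sum_le_sum_abs _ _
        _ ≤ ∑ _y ∈ Finset.univ.filter (fun y => M.mulVec y = w.1), (1:ℝ) :=
            Finset.sum_le_sum fun y _ => e2_abs _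
        _ = ((Finset.univ.filter (fun y => M.mulVec y = w.1)).card : ℝ) := by simp
        _ ≤ (2:ℝ) ^ (k' - χ) := by
            rw [← hcardR]
            exact_mod_cast card_sol_le k k' M w.1
    have hb : |2 ^ k * ∑ y ∈ Finset.univ.filter (fun y => M.mulVec y = w.1),
        e2 (∑ j, y j * w.2 j)| ≤ C := by
      rw [abs_mul, abs_pow, abs_two, hC]
      exact mul_le_mul_of_nonneg_left habs (by positivity)
    calc f w = |2 ^ k * ∑ y ∈ Finset.univ.filter (fun y => M.mulVec y = w.1),
        e2 (∑ j, y j * w.2 j)| ^ 2 := rfl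
      _ ≤ C ^ 2 := pow_le_pow_left₀ (abs_nonneg _) hb 2
  have h0 : f (0, 0) = C ^ 2 := by
    have hs : (∑ y ∈ Finset.univ.filter
          (fun y : Fin k' → ZMod 2 => M.mulVec y = (0 : Fin k → ZMod 2)),
        e2 (∑ j, y j * (0 : Fin k' → ZMod 2) j)) = (2:ℝ) ^ (k' - χ) := by
      simp only [Pi.zero_apply, mul_zero, Finset.sum_const_zero, e2_zero,
        Finset.sum_const, nsmul_eq_mul, mul_one]
      exact hcardR
    rw [hf]
    simp only
    rw [hs, hC, abs_of_pos (by positivity)]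
  have hbdd : BddAbove (Set.range f) := Set.Finite.bddAbove (Set.finite_range f)
  have hsup : (⨆ w, f w) = C ^ 2 :=
    le_antisymm (ciSup_le hle) (h0 ▸ le_ciSup hbdd (0, 0))
  rw [hsup]
  rw [hC, mul_pow, ← pow_mul, ← pow_mul, ← pow_add]
  rw [div_eq_iff (by positivity : (2:ℝ) ^ (k + k') ≠ 0), ← pow_add]
  congr 1
  omega
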